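/- arXiv:1402.2255 — 2 statements merged into one kernel-verified Lean document; each statement's English description precedes it below -/
import Mathlib

section
/- Let C = λ x₀ x₀* with λ > 0 and ‖x₀‖ = 1, and let Ĉ be any Hermitian matrix. If x̂ is a unit-norm maximizer of x ↦ x* Ĉ x over the unit sphere, then (λ/2) ‖x̂ x̂* − x₀ x₀*‖_F² ≤ 2 ‖Ĉ − C‖, where ‖·‖ is the operator norm. -/
open Matrix

private lemma quad_re_le (n : ℕ) (A : Matrix (Fin n) (Fin n) ℂ) (x : Fin n → ℂ)
    (hx : ∑ i, ‖x i‖ ^ 2 = 1) :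
    (star x ⬝ᵥ A.mulVec x).re ≤ ‖Matrix.toEuclideanCLM (𝕜 := ℂ) A‖ := by
  set y : EuclideanSpace ℂ (Fin n) := (WithLp.equiv 2 _).symm x with hy
  have hyn : ‖y‖ = 1 := by
    rw [EuclideanSpace.norm_eq]
    simp only [hy, WithLp.equiv_symm_apply, PiLp.toLp_apply]
    rw [hx, Real.sqrt_one]
  have key : star x ⬝ᵥ A.mulVec x =
      inner ℂ y (Matrix.toEuclideanCLM (𝕜 := ℂ) A y) := by
    rw [hy, WithLp.equiv_symm_apply, Matrix.toEuclideanCLM_toLp,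
      EuclideanSpace.inner_toLp_toLp]
    rw [dotProduct_comm]
  rw [key]
  calc (inner ℂ y (Matrix.toEuclideanCLM (𝕜 := ℂ) A y) : ℂ).re
      ≤ ‖(inner ℂ y (Matrix.toEuclideanCLM (𝕜 := ℂ) A y) : ℂ)‖ := Complex.re_le_norm _
    _ ≤ ‖y‖ * ‖Matrix.toEuclideanCLM (𝕜 := ℂ) A y‖ := norm_inner_le_norm _ _
    _ ≤ ‖y‖ * (‖Matrix.toEuclideanCLM (𝕜 := ℂ) A‖ * ‖y‖) := by
        gcongr; exact (Matrix.toEuclideanCLM (𝕜 := ℂ) A).le_opNorm y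
    _ = ‖Matrix.toEuclideanCLM (𝕜 := ℂ) A‖ := by rw [hyn]; ring

private lemma term_id (a b c d : ℂ) :
    ‖a * (starRingEnd ℂ) b - c * (starRingEnd ℂ) d‖ ^ 2
      = ‖a‖ ^ 2 * ‖b‖ ^ 2 + ‖c‖ ^ 2 * ‖d‖ ^ 2
        - 2 * (((starRingEnd ℂ) c * a) * (d * (starRingEnd ℂ) b)).re := by
  simp only [← Complex.normSq_eq_norm_sq]
  simp only [Complex.normSq_apply, Complex.sub_re, Complex.sub_im, Complex.mul_re,
    Complex.mul_im, Complex.conj_re, Complex.conj_im]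
  ring

/-- If `x̂` is a unit-norm maximizer of the quadratic form of a Hermitian matrix `Ĉ`
and `C = λ x₀ x₀*`, then `(λ/2) ‖x̂ x̂* − x₀ x₀*‖_F² ≤ 2 ‖Ĉ − C‖`. -/
theorem max_eigvec_frobenius_bound
    (n : ℕ) (x₀ xh : Fin n → ℂ) (l : ℝ) (hl : 0 < l)
    (hx₀ : ∑ i, ‖x₀ i‖ ^ 2 = 1) (hxh : ∑ i, ‖xh i‖ ^ 2 = 1)
    (C Ch : Matrix (Fin n) (Fin n) ℂ)
    (hC : C = (l : ℂ) • Matrix.vecMulVec x₀ (star x₀))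
    (hherm : Ch.IsHermitian)
    (hmax : ∀ x : Fin n → ℂ, (∑ i, ‖x i‖ ^ 2 = 1) →
      (star x ⬝ᵥ Ch.mulVec x).re ≤ (star xh ⬝ᵥ Ch.mulVec xh).re) :
    (l / 2) * ∑ i, ∑ j,
        ‖(Matrix.vecMulVec xh (star xh) - Matrix.vecMulVec x₀ (star x₀)) i j‖ ^ 2
      ≤ 2 * ‖Matrix.toEuclideanCLM (𝕜 := ℂ) (Ch - C)‖ := by
  set s : ℂ := star x₀ ⬝ᵥ xh with hs
  -- the Frobenius-norm identity
  have hre : ∑ i, ∑ j, (((starRingEnd ℂ) (x₀ i) * xh i) * (x₀ j * (starRingEnd ℂ) (xh j))).re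
      = ‖s‖ ^ 2 := by
    have h1 : (∑ i, (starRingEnd ℂ) (x₀ i) * xh i) = s := by
      simp [hs, dotProduct]
    have h2 : (∑ j, x₀ j * (starRingEnd ℂ) (xh j)) = (starRingEnd ℂ) s := by
      simp [hs, dotProduct, map_sum, _root_.map_mul, mul_comm]
    calc ∑ i, ∑ j, (((starRingEnd ℂ) (x₀ i) * xh i) * (x₀ j * (starRingEnd ℂ) (xh j))).re
        = ((∑ i, (starRingEnd ℂ) (x₀ i) * xh i) * (∑ j, x₀ j * (starRingEnd ℂ) (xh j))).re := by
          rw [Finset.sum_mul_sum]; simp [Complex.re_sum]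
      _ = (s * (starRingEnd ℂ) s).re := by rw [h1, h2]
      _ = ‖s‖ ^ 2 := by
          rw [Complex.mul_conj, Complex.normSq_eq_norm_sq, Complex.ofReal_re]
  have hterm : ∀ i j, ‖(Matrix.vecMulVec xh (star xh) - Matrix.vecMulVec x₀ (star x₀)) i j‖ ^ 2
      = ‖xh i‖ ^ 2 * ‖xh j‖ ^ 2 + ‖x₀ i‖ ^ 2 * ‖x₀ j‖ ^ 2
        - 2 * (((starRingEnd ℂ) (x₀ i) * xh i) * (x₀ j * (starRingEnd ℂ) (xh j))).re := by
    intro i j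
    simp only [Matrix.sub_apply, Matrix.vecMulVec_apply, Pi.star_apply, RCLike.star_def]
    exact term_id _ _ _ _
  have hsum : ∑ i, ∑ j,
      ‖(Matrix.vecMulVec xh (star xh) - Matrix.vecMulVec x₀ (star x₀)) i j‖ ^ 2
      = 2 - 2 * ‖s‖ ^ 2 := by
    simp only [hterm, Finset.sum_sub_distrib, Finset.sum_add_distrib, ← Finset.mul_sum]
    rw [← Finset.sum_mul, ← Finset.sum_mul, hxh, hx₀, hre]
    ring
  -- quadratic form of C
  have hq : ∀ x : Fin n → ℂ, star x ⬝ᵥ C.mulVec x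
      = (l : ℂ) * (star x ⬝ᵥ x₀) * (star x₀ ⬝ᵥ x) := by
    intro x
    rw [hC]
    simp [Matrix.mulVec, Matrix.vecMulVec_apply, dotProduct, Finset.mul_sum,
      Finset.sum_mul, mul_comm, mul_assoc, mul_left_comm]
  have hx₀1 : star x₀ ⬝ᵥ x₀ = 1 := by
    have : star x₀ ⬝ᵥ x₀ = ((∑ i, ‖x₀ i‖ ^ 2 : ℝ) : ℂ) := by
      simp [dotProduct, Pi.star_apply, RCLike.star_def, Complex.conj_mul']
    rw [this, hx₀]; norm_num
  have hCx₀ : (star x₀ ⬝ᵥ C.mulVec x₀).re = l := by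
    rw [hq, hx₀1]; simp
  have hconj : star xh ⬝ᵥ x₀ = (starRingEnd ℂ) s := by
    simp [hs, dotProduct, map_sum, _root_.map_mul, mul_comm]
  have hCxh : (star xh ⬝ᵥ C.mulVec xh).re = l * ‖s‖ ^ 2 := by
    rw [hq, hconj, ← hs]
    have : (l : ℂ) * (starRingEnd ℂ) s * s = ((l * ‖s‖ ^ 2 : ℝ) : ℂ) := by
      rw [mul_assoc, mul_comm ((starRingEnd ℂ) s), Complex.mul_conj]
      rw [Complex.normSq_eq_norm_sq]
      push_cast
      simp
    rw [this, Complex.ofReal_re]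
  -- assemble the inequality
  have e1 := quad_re_le n (C - Ch) x₀ hx₀
  have e2 := quad_re_le n (Ch - C) xh hxh
  have enorm : ‖Matrix.toEuclideanCLM (𝕜 := ℂ) (C - Ch)‖
      = ‖Matrix.toEuclideanCLM (𝕜 := ℂ) (Ch - C)‖ := by
    rw [show C - Ch = -(Ch - C) from (neg_sub _ _).symm, map_neg, norm_neg]
  rw [enorm] at e1
  simp only [Matrix.sub_mulVec, dotProduct_sub, Complex.sub_re] at e1 e2
  have hmx := hmax x₀ hx₀
  rw [hsum]
  nlinarith [e1, e2, hmx, hCx₀, hCxh]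
end

section
/- Let L ~ Laplace(0,1) and N ~ Laplace(0, 1/γ) be independent (γ > 0). Then E[ sign(L + N) · L ] = 1 − 1/(1+γ)². In particular, writing σ = 1/γ² this equals (1 + 2√σ)/(1 + √σ)², which is strictly positive. -/
open MeasureTheory ProbabilityTheory Real Set

noncomputable def sgn (t : ℝ) : ℝ := if 0 ≤ t then 1 else -1

lemma sgn_meas : Measurable sgn := by
  unfold sgn
  exact Measurable.ite measurableSet_Ici measurable_const measurable_const

lemma abs_sgn (t : ℝ) : |sgn t| = 1 := by unfold sgn; split <;> norm_num

lemma expInt {c : ℝ} (hc : 0 < c) (a : ℝ) :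
    ∫ x in Ioi a, Real.exp (-(c * x)) = Real.exp (-(c * a)) / c := by
  have h := integral_comp_mul_left_Ioi (fun u => Real.exp (-u)) a hc
  simp only [smul_eq_mul] at h
  rw [h, integral_exp_neg_Ioi]
  field_simp

lemma expIntOn {c : ℝ} (hc : 0 < c) (a : ℝ) :
    IntegrableOn (fun x : ℝ => Real.exp (-(c * x))) (Ioi a) := by
  simpa [neg_mul] using exp_neg_integrableOn_Ioi a hc

lemma momentOn1 : IntegrableOn (fun x : ℝ => x * Real.exp (-x)) (Ioi 0) := by
  have h := Real.GammaIntegral_convergent (by norm_num : (0:ℝ) < 2)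
  apply h.congr_fun ?_ measurableSet_Ioi
  intro x hx
  simp only [show (2:ℝ) - 1 = 1 by norm_num, Real.rpow_one]
  ring

lemma momentOn {c : ℝ} (hc : 0 < c) :
    IntegrableOn (fun x : ℝ => x * Real.exp (-(c * x))) (Ioi 0) := by
  have h := (integrableOn_Ioi_comp_mul_left_iff (fun x : ℝ => x * Real.exp (-x)) 0 hc).2
    (by simpa using momentOn1)
  have h2 := h.const_mul c⁻¹
  have hfun : (fun x : ℝ => c⁻¹ * (c * x * Real.exp (-(c * x))))
      = fun x => x * Real.exp (-(c * x)) := by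
    funext x
    field_simp
  rwa [hfun] at h2

lemma momentInt {c : ℝ} (hc : 0 < c) :
    ∫ x in Ioi 0, x * Real.exp (-(c * x)) = 1 / c ^ 2 := by
  have h := integral_rpow_mul_exp_neg_mul_Ioi (by norm_num : (0:ℝ) < 2) hc
  rw [show ((2:ℝ) - 1) = 1 by norm_num] at h
  simp only [Real.rpow_one] at h
  rw [h, Real.Gamma_ofNat_eq_factorial 1]
  rw [show ((1/c : ℝ) ^ (2:ℝ)) = (1/c)^(2:ℕ) by
    rw [← Real.rpow_natCast (1/c) 2]; norm_num]
  simp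

lemma wd_int {d : ℝ → ℝ} (hd : Measurable d) (hd0 : ∀ x, 0 ≤ d x) (g : ℝ → ℝ) :
    ∫ x, g x ∂(volume.withDensity fun t => ENNReal.ofReal (d t))
      = ∫ x, d x * g x := by
  rw [show (fun t => ENNReal.ofReal (d t)) = (fun t => ((d t).toNNReal : ENNReal)) from rfl,
    integral_withDensity_eq_integral_smul hd.real_toNNReal]
  congr 1
  funext x
  rw [NNReal.smul_def, smul_eq_mul, Real.coe_toNNReal _ (hd0 x)]

lemma wd_integrable_iff {d : ℝ → ℝ} (hd : Measurable d) (hd0 : ∀ x, 0 ≤ d x) (g : ℝ → ℝ) :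
    Integrable g (volume.withDensity fun t => ENNReal.ofReal (d t))
      ↔ Integrable (fun x => g x * d x) volume := by
  rw [integrable_withDensity_iff hd.ennreal_ofReal (ae_of_all _ fun x => ENNReal.ofReal_lt_top)]
  have : (fun x => g x * (ENNReal.ofReal (d x)).toReal) = fun x => g x * d x := by
    funext x
    rw [ENNReal.toReal_ofReal (hd0 x)]
  rw [this]

lemma integrable_comp_abs {f : ℝ → ℝ} (hf : IntegrableOn f (Ioi 0)) :
    Integrable (fun x => f |x|) volume := by
  have int_Ioi : IntegrableOn (fun x => f |x|) (Ioi 0) :=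
    hf.congr_fun (fun x hx => by rw [abs_of_pos hx]) measurableSet_Ioi
  have int_Iic : IntegrableOn (fun x => f |x|) (Iic 0) := by
    rw [← Measure.map_neg_eq_self (volume : Measure ℝ)]
    have m : MeasurableEmbedding fun x : ℝ => -x := (Homeomorph.neg ℝ).measurableEmbedding
    rw [m.integrableOn_map_iff]
    simp_rw [Function.comp_def, abs_neg, neg_preimage, neg_Iic, neg_zero]
    exact Iff.mpr integrableOn_Ici_iff_integrableOn_Ioi int_Ioi
  have h := int_Iic.union int_Ioi
  rwa [Iic_union_Ioi, integrableOn_univ] at h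
lemma outer_integral {γ : ℝ} (hγ : 0 < γ) :
    ∫ x : ℝ, (1/2) * Real.exp (-|x|) * (|x| * (1 - Real.exp (-(γ * |x|))))
      = 1 - 1/(1+γ)^2 := by
  have h := integral_comp_abs
    (f := fun t => (1/2) * Real.exp (-t) * (t * (1 - Real.exp (-(γ * t)))))
  rw [h]
  have hsub : ∀ t ∈ Ioi (0:ℝ), (1/2) * Real.exp (-t) * (t * (1 - Real.exp (-(γ * t))))
      = (1/2) * (t * Real.exp (-(1*t))) - (1/2) * (t * Real.exp (-((1+γ)*t))) := by
    intro t _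
    have he : Real.exp (-t) * Real.exp (-(γ*t)) = Real.exp (-((1+γ)*t)) := by
      rw [← Real.exp_add]; ring_nf
    simp only [one_mul]
    linear_combination (-(t/2)) * he
  rw [setIntegral_congr_fun measurableSet_Ioi hsub,
    integral_sub ((momentOn one_pos).const_mul (1/2))
      ((momentOn (show (0:ℝ) < 1+γ by linarith)).const_mul (1/2)),
    integral_const_mul, integral_const_mul, momentInt one_pos,
    momentInt (show (0:ℝ) < 1+γ by linarith)]
  norm_num
  ring

/-- For independent `L ~ Laplace(0,1)` and `N ~ Laplace(0,1/γ)` (`γ > 0`),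
`E[sign(L+N)·L] = 1 − 1/(1+γ)² = (1+2√σ)/(1+√σ)² > 0` where `σ = 1/γ²`. -/
theorem sign_laplace_noise_coefficient
    {Ω : Type*} [MeasurableSpace Ω] (P : Measure Ω) [IsProbabilityMeasure P]
    (γ : ℝ) (hγ : 0 < γ) (L N : Ω → ℝ) (hmL : Measurable L) (hmN : Measurable N)
    (hL : Measure.map L P
      = volume.withDensity (fun t => ENNReal.ofReal ((1 / 2) * Real.exp (-|t|))))
    (hN : Measure.map N P
      = volume.withDensity (fun t => ENNReal.ofReal ((γ / 2) * Real.exp (-γ * |t|))))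
    (hind : IndepFun L N P) (σ : ℝ) (hσ : σ = 1 / γ ^ 2) :
    (∫ ω, sgn (L ω + N ω) * L ω ∂P) = 1 - 1 / (1 + γ) ^ 2
      ∧ 1 - 1 / (1 + γ) ^ 2 = (1 + 2 * Real.sqrt σ) / (1 + Real.sqrt σ) ^ 2
      ∧ 0 < 1 - 1 / (1 + γ) ^ 2 := by
  have hγ' : (1:ℝ) + γ ≠ 0 := by linarith
  refine ⟨?main, ?alg, ?pos⟩
  case alg =>
    rw [hσ, show (1:ℝ) / γ ^ 2 = (1/γ)^2 by ring, Real.sqrt_sq (by positivity)]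
    field_simp
    ring
  case pos =>
    rw [sub_pos]
    rw [div_lt_one (by positivity)]
    nlinarith
  case main =>
  haveI hνP : IsProbabilityMeasure (Measure.map N P) :=
    Measure.isProbabilityMeasure_map hmN.aemeasurable
  haveI hμP : IsProbabilityMeasure (Measure.map L P) :=
    Measure.isProbabilityMeasure_map hmL.aemeasurable
  have hfNmeas : Measurable fun y : ℝ => (γ/2) * Real.exp (-γ * |y|) := by fun_prop
  have hfN0 : ∀ y : ℝ, 0 ≤ (γ/2) * Real.exp (-γ * |y|) := fun y => by positivity
  have hfLmeas : Measurable fun x : ℝ => (1/2) * Real.exp (-|x|) := by fun_prop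
  have hfL0 : ∀ x : ℝ, 0 ≤ (1/2) * Real.exp (-|x|) := fun x => by positivity
  have habsN : (fun y : ℝ => (γ/2) * Real.exp (-γ * |y|))
      = fun y => (γ/2) * Real.exp (-(γ * |y|)) := by
    funext y; rw [neg_mul]
  have hNint : Integrable (fun y : ℝ => (γ/2) * Real.exp (-γ * |y|)) volume := by
    rw [habsN]
    exact integrable_comp_abs ((expIntOn hγ 0).const_mul (γ/2))
  have hNtotal : ∫ y : ℝ, (γ/2) * Real.exp (-γ * |y|) = 1 := by
    rw [habsN]
    have h := integral_comp_abs (f := fun t => (γ/2) * Real.exp (-(γ * t)))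
    rw [h, integral_const_mul, expInt hγ 0]
    simp only [mul_zero, neg_zero, Real.exp_zero]
    field_simp
  have hGneg : ∀ a : ℝ, a ≤ 0 →
      ∫ y in Iio a, (γ/2) * Real.exp (-γ * |y|) = (1/2) * Real.exp (γ * a) := by
    intro a ha
    rw [habsN, setIntegral_congr_set Iio_ae_eq_Iic,
      setIntegral_congr_fun measurableSet_Iic
        (fun y (hy : y ≤ a) => by
          show (γ/2) * Real.exp (-(γ * |y|)) = (γ/2) * Real.exp (-(γ * (-y)))
          rw [abs_of_nonpos (le_trans hy ha)]),
      integral_comp_neg_Iic a (fun u => (γ/2) * Real.exp (-(γ * u))),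
      integral_const_mul, expInt hγ (-a)]
    rw [show -(γ * -a) = γ * a by ring]
    field_simp
  have hGpos : ∀ a : ℝ, 0 ≤ a →
      ∫ y in Ici a, (γ/2) * Real.exp (-γ * |y|) = (1/2) * Real.exp (-(γ * a)) := by
    intro a ha
    rw [habsN, setIntegral_congr_set Ioi_ae_eq_Ici.symm,
      setIntegral_congr_fun measurableSet_Ioi
        (fun y (hy : a < y) => by
          show (γ/2) * Real.exp (-(γ * |y|)) = (γ/2) * Real.exp (-(γ * y))
          rw [abs_of_pos (lt_of_le_of_lt ha hy)]),
      integral_const_mul, expInt hγ a]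
    field_simp
  have hsplitN : ∀ b : ℝ, (∫ y in Iio b, (γ/2) * Real.exp (-γ * |y|))
      + (∫ y in Ici b, (γ/2) * Real.exp (-γ * |y|)) = 1 := by
    intro b
    rw [intervalIntegral.integral_Iio_add_Ici hNint.integrableOn hNint.integrableOn, hNtotal]
  have hsgnint : ∀ x : ℝ,
      Integrable (fun y => (γ/2) * Real.exp (-γ * |y|) * sgn (x + y)) volume := by
    intro x
    refine hNint.mono'
      ((hfNmeas.mul (sgn_meas.comp (measurable_const.add measurable_id))).aestronglyMeasurable)
      (ae_of_all _ fun y => ?_)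
    rw [Real.norm_eq_abs, abs_mul, abs_sgn, mul_one, abs_of_nonneg (hfN0 y)]
  have hJ : ∀ x : ℝ, (∫ y, (γ/2) * Real.exp (-γ * |y|) * sgn (x + y)) * x
      = |x| * (1 - Real.exp (-(γ * |x|))) := by
    intro x
    have hs := intervalIntegral.integral_Iio_add_Ici (b := -x) (μ := volume)
      (hsgnint x).integrableOn (hsgnint x).integrableOn
    have hIio : ∫ y in Iio (-x), (γ/2) * Real.exp (-γ * |y|) * sgn (x+y)
        = - ∫ y in Iio (-x), (γ/2) * Real.exp (-γ * |y|) := by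
      rw [← integral_neg]
      refine setIntegral_congr_fun measurableSet_Iio fun y (hy : y < -x) => ?_
      have hneg : ¬ (0 ≤ x + y) := by push_neg; linarith
      simp only [sgn, if_neg hneg]
      ring
    have hIci : ∫ y in Ici (-x), (γ/2) * Real.exp (-γ * |y|) * sgn (x+y)
        = ∫ y in Ici (-x), (γ/2) * Real.exp (-γ * |y|) := by
      refine setIntegral_congr_fun measurableSet_Ici fun y (hy : -x ≤ y) => ?_
      have hpos : 0 ≤ x + y := by linarith
      simp only [sgn, if_pos hpos, mul_one]
    rw [hIio, hIci] at hs
    rcases le_or_gt 0 x with hx | hx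
    · have hg := hGneg (-x) (by linarith)
      have hh : ∫ y in Ici (-x), (γ/2) * Real.exp (-γ * |y|)
          = 1 - (1/2) * Real.exp (γ * -x) := by
        have := hsplitN (-x); linarith
      rw [← hs, hg, hh, abs_of_nonneg hx, show γ * -x = -(γ * x) by ring]
      ring
    · have hh := hGpos (-x) (by linarith)
      have hg : ∫ y in Iio (-x), (γ/2) * Real.exp (-γ * |y|)
          = 1 - (1/2) * Real.exp (-(γ * -x)) := by
        have := hsplitN (-x); linarith
      rw [← hs, hg, hh, abs_of_neg hx]
      ring
  have hpair : Measure.map (fun ω => (L ω, N ω)) P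
      = (Measure.map L P).prod (Measure.map N P) :=
    (indepFun_iff_map_prod_eq_prod_map_map hmL.aemeasurable hmN.aemeasurable).mp hind
  have hφm : Measurable fun p : ℝ × ℝ => sgn (p.1 + p.2) * p.1 :=
    (sgn_meas.comp (measurable_fst.add measurable_snd)).mul measurable_fst
  have habsμ : Integrable (fun x : ℝ => |x|) (Measure.map L P) := by
    rw [hL, wd_integrable_iff hfLmeas hfL0]
    have h1 := momentOn1.const_mul (1/2)
    have h2 : (fun x : ℝ => (1/2) * (x * Real.exp (-x)))
        = fun t : ℝ => t * ((1/2) * Real.exp (-t)) := by funext t; ring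
    rw [h2] at h1
    exact integrable_comp_abs h1
  have hφint : Integrable (fun p : ℝ × ℝ => sgn (p.1 + p.2) * p.1)
      ((Measure.map L P).prod (Measure.map N P)) := by
    rw [integrable_prod_iff hφm.aestronglyMeasurable]
    constructor
    · refine ae_of_all _ fun x => ?_
      refine (integrable_const |x|).mono'
        (((sgn_meas.comp (measurable_const.add measurable_id)).mul
          measurable_const).aestronglyMeasurable)
        (ae_of_all _ fun y => ?_)
      rw [Real.norm_eq_abs, abs_mul, abs_sgn, one_mul]
    · have h : (fun x : ℝ => ∫ y, ‖sgn (x + y) * x‖ ∂(Measure.map N P))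
          = fun x : ℝ => |x| := by
        funext x
        have h2 : (fun y : ℝ => ‖sgn (x + y) * x‖) = fun _ : ℝ => |x| := by
          funext y; rw [Real.norm_eq_abs, abs_mul, abs_sgn, one_mul]
        rw [h2, integral_const]
        simp
      simpa only [h] using habsμ
  have hinner : ∀ x : ℝ, ∫ y, sgn (x + y) * x ∂(Measure.map N P)
      = |x| * (1 - Real.exp (-(γ * |x|))) := by
    intro x
    rw [hN, wd_int hfNmeas hfN0]
    rw [show (fun y : ℝ => (γ/2) * Real.exp (-γ * |y|) * (sgn (x + y) * x))
        = fun y : ℝ => ((γ/2) * Real.exp (-γ * |y|) * sgn (x + y)) * x by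
      funext y; ring]
    rw [integral_mul_const]
    exact hJ x
  calc ∫ ω, sgn (L ω + N ω) * L ω ∂P
      = ∫ p : ℝ × ℝ, sgn (p.1 + p.2) * p.1
          ∂((Measure.map L P).prod (Measure.map N P)) := by
        rw [← hpair, integral_map (hmL.prodMk hmN).aemeasurable
          hφm.aestronglyMeasurable]
    _ = ∫ x, ∫ y, sgn (x + y) * x ∂(Measure.map N P) ∂(Measure.map L P) :=
        integral_prod _ hφint
    _ = ∫ x, |x| * (1 - Real.exp (-(γ * |x|))) ∂(Measure.map L P) := by
        rw [funext hinner]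
    _ = ∫ x : ℝ, (1/2) * Real.exp (-|x|) * (|x| * (1 - Real.exp (-(γ * |x|)))) := by
        rw [hL, wd_int hfLmeas hfL0]
    _ = 1 - 1 / (1 + γ) ^ 2 := outer_integral hγ
end
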